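/- Let Y : ℝ → ℝ be twice differentiable and satisfy Y(z)·Y''(z) + Y'(z)² + 3z·Y'(z) + Y(z) + 2z² = 0 for all z ∈ ℝ. Let Z : I → ℝ be a differentiable function on an open interval I with Z'(t) = Y(Z(t)) for all t ∈ I. Then Z is three times differentiable and satisfies Z''' + 3Z·Z'' + Z'² + 2Z²·Z' = 0 on I. -/

import Mathlib

/-- if `Y` is twice differentiable with
`Y·Y'' + Y'² + 3z·Y' + Y + 2z² = 0` everywhere, and `Z' = Y(Z)` on an open interval,
then `Z` is three times differentiable and `Z''' + 3ZZ'' + Z'² + 2Z²Z' = 0`. -/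
theorem stmt_13 (Y : ℝ → ℝ)
    (hY1 : Differentiable ℝ Y) (hY2 : Differentiable ℝ (deriv Y))
    (hYode : ∀ z : ℝ, Y z * deriv (deriv Y) z + (deriv Y z) ^ 2 + 3 * z * deriv Y z
      + Y z + 2 * z ^ 2 = 0)
    (I : Set ℝ) (hI : IsOpen I) (hIint : I.OrdConnected)
    (Z : ℝ → ℝ) (hZ : ∀ t ∈ I, DifferentiableAt ℝ Z t)
    (hZode : ∀ t ∈ I, deriv Z t = Y (Z t)) :
    (∀ t ∈ I, DifferentiableAt ℝ (deriv Z) t ∧ DifferentiableAt ℝ (deriv (deriv Z)) t) ∧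
    ∀ t ∈ I,
      deriv (deriv (deriv Z)) t + 3 * Z t * deriv (deriv Z) t + (deriv Z t) ^ 2
        + 2 * Z t ^ 2 * deriv Z t = 0 := by
  -- eventual equality deriv Z = Y ∘ Z near each point of I
  have eq1 : ∀ t ∈ I, deriv Z =ᶠ[nhds t] fun s => Y (Z s) := by
    intro t ht
    filter_upwards [hI.mem_nhds ht] with s hs using hZode s hs
  have h1 : ∀ t ∈ I, DifferentiableAt ℝ (fun s => Y (Z s)) t := fun t ht =>
    (hY1 (Z t)).comp t (hZ t ht)
  have hd1 : ∀ t ∈ I, DifferentiableAt ℝ (deriv Z) t := fun t ht =>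
    (h1 t ht).congr_of_eventuallyEq (eq1 t ht)
  have hd2eq : ∀ t ∈ I, deriv (deriv Z) t = deriv Y (Z t) * Y (Z t) := by
    intro t ht
    rw [(eq1 t ht).deriv_eq]
    have := deriv_comp t (hY1 (Z t)) (hZ t ht)
    simpa [Function.comp_def, hZode t ht] using this
  have h2 : ∀ t ∈ I, DifferentiableAt ℝ (fun s => deriv Y (Z s) * Y (Z s)) t := fun t ht =>
    ((hY2 (Z t)).comp t (hZ t ht)).mul ((hY1 (Z t)).comp t (hZ t ht))
  have eq2 : ∀ t ∈ I, deriv (deriv Z) =ᶠ[nhds t] fun s => deriv Y (Z s) * Y (Z s) := by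
    intro t ht
    filter_upwards [hI.mem_nhds ht] with s hs using hd2eq s hs
  have hd2 : ∀ t ∈ I, DifferentiableAt ℝ (deriv (deriv Z)) t := fun t ht =>
    (h2 t ht).congr_of_eventuallyEq (eq2 t ht)
  refine ⟨fun t ht => ⟨hd1 t ht, hd2 t ht⟩, fun t ht => ?_⟩
  have hdercomp : deriv (fun s => Y (Z s)) t = deriv Y (Z t) * Y (Z t) := by
    have := deriv_comp t (hY1 (Z t)) (hZ t ht)
    simpa [Function.comp_def, hZode t ht] using this
  have hdercomp2 : deriv (fun s => deriv Y (Z s)) t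
      = deriv (deriv Y) (Z t) * Y (Z t) := by
    have := deriv_comp t (hY2 (Z t)) (hZ t ht)
    simpa [Function.comp_def, hZode t ht] using this
  have hd3eq : deriv (deriv (deriv Z)) t
      = deriv (deriv Y) (Z t) * Y (Z t) * Y (Z t)
        + deriv Y (Z t) * (deriv Y (Z t) * Y (Z t)) := by
    rw [(eq2 t ht).deriv_eq]
    have dA : DifferentiableAt ℝ (fun s => deriv Y (Z s)) t := (hY2 (Z t)).comp t (hZ t ht)
    have dB : DifferentiableAt ℝ (fun s => Y (Z s)) t := (hY1 (Z t)).comp t (hZ t ht)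
    rw [deriv_fun_mul dA dB]
    rw [hdercomp, hdercomp2]
  rw [hd3eq, hd2eq t ht, hZode t ht]
  linear_combination Y (Z t) * hYode (Z t)
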